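/- Let 0 < λ₁ ≤ λ₂ ≤ … ≤ λ_m be positive reals and x, y ∈ ℝᵐ with ∑ᵢ xᵢ yᵢ = 0. Then |∑ᵢ λᵢ xᵢ yᵢ| ≤ (1 − λ₁/λ_m) · (∑ᵢ λᵢ xᵢ²)^{1/2} · (∑ᵢ λᵢ yᵢ²)^{1/2}. -/
import Mathlib


/-- For positive reals `0 < λ₁ ≤ ⋯ ≤ λ_m` and Euclidean-orthogonal vectors
`x, y ∈ ℝᵐ`: `|∑ λᵢ xᵢ yᵢ| ≤ (1 - λ₁/λ_m) (∑ λᵢ xᵢ²)^{1/2} (∑ λᵢ yᵢ²)^{1/2}`. -/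
theorem stmt_2 {m : ℕ} (lam : Fin (m + 1) → ℝ)
    (hpos : ∀ i, 0 < lam i) (hmono : Monotone lam)
    (x y : Fin (m + 1) → ℝ) (hxy : ∑ i, x i * y i = 0) :
    |∑ i, lam i * x i * y i| ≤
      (1 - lam 0 / lam (Fin.last m)) *
        Real.sqrt (∑ i, lam i * (x i) ^ 2) * Real.sqrt (∑ i, lam i * (y i) ^ 2) := by
  set a := lam 0 with ha'
  set b := lam (Fin.last m) with hb'
  have ha : 0 < a := hpos 0
  have hb : 0 < b := hpos _
  have hc : 0 ≤ 1 - a / b := by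
    have hab : a ≤ b := hmono (Fin.zero_le _)
    have : a / b ≤ 1 := (div_le_one hb).mpr hab
    linarith
  have h1 : ∑ i, lam i * x i * y i = ∑ i, (lam i - a) * (x i * y i) := by
    simp only [sub_mul, Finset.sum_sub_distrib, ← Finset.mul_sum, hxy, mul_zero, sub_zero]
    congr 1; ext i; ring
  rw [h1]
  have step1 : |∑ i, (lam i - a) * (x i * y i)| ≤
      ∑ i, (1 - a / b) * ((Real.sqrt (lam i) * |x i|) * (Real.sqrt (lam i) * |y i|)) := by
    refine (Finset.abs_sum_le_sum_abs _ _).trans (Finset.sum_le_sum fun i _ => ?_)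
    have hla : a ≤ lam i := hmono (Fin.zero_le i)
    have hlb : lam i ≤ b := hmono (Fin.le_last i)
    have hsq : Real.sqrt (lam i) * Real.sqrt (lam i) = lam i :=
      Real.mul_self_sqrt (hpos i).le
    have hbound : lam i - a ≤ (1 - a / b) * lam i := by
      have : a / b * lam i ≤ a := by
        rw [div_mul_eq_mul_div, div_le_iff₀ hb]
        nlinarith
      nlinarith
    calc |(lam i - a) * (x i * y i)| = (lam i - a) * |x i * y i| := by
          rw [abs_mul, abs_of_nonneg (by linarith)]
      _ ≤ (1 - a / b) * lam i * |x i * y i| :=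
          mul_le_mul_of_nonneg_right hbound (abs_nonneg _)
      _ = (1 - a / b) * ((Real.sqrt (lam i) * |x i|) * (Real.sqrt (lam i) * |y i|)) := by
          rw [abs_mul]; rw [mul_assoc]; congr 1
          rw [show (Real.sqrt (lam i) * |x i|) * (Real.sqrt (lam i) * |y i|)
            = (Real.sqrt (lam i) * Real.sqrt (lam i)) * (|x i| * |y i|) by ring, hsq]
  rw [← Finset.mul_sum] at step1
  refine step1.trans ?_
  rw [mul_assoc]
  refine mul_le_mul_of_nonneg_left ?_ hc
  have cs := Real.sum_mul_le_sqrt_mul_sqrt Finset.univ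
    (fun i => Real.sqrt (lam i) * |x i|) (fun i => Real.sqrt (lam i) * |y i|)
  have hx : ∑ i, (Real.sqrt (lam i) * |x i|) ^ 2 = ∑ i, lam i * (x i) ^ 2 :=
    Finset.sum_congr rfl fun i _ => by rw [mul_pow, Real.sq_sqrt (hpos i).le, sq_abs]
  have hy : ∑ i, (Real.sqrt (lam i) * |y i|) ^ 2 = ∑ i, lam i * (y i) ^ 2 :=
    Finset.sum_congr rfl fun i _ => by rw [mul_pow, Real.sq_sqrt (hpos i).le, sq_abs]
  rw [hx, hy] at cs
  exact cs
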